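/- If β̂ and β₀ are vectors in ℝ^p and for each i the functional a satisfies |a(z_i, β) − a(z_i, β₀) − da(z_i)'(β−β₀)| ≤ c_a(z_i)·‖β−β₀‖₂ for all β, then the normalized Euclidean norm (1/√n)·‖(a(z_i,β̂) − a(z_i,β₀))_{i=1..n}‖₂ is bounded by ‖β̂−β₀‖₂ · (φ_max^{1/2} + ‖(c_a(z_i))_{i=1..n}‖_{2,n}), where φ_max is the largest eigenvalue of the principal submatrix of A_a = (1/n)·Σ_i da(z_i)da(z_i)' corresponding to the index set support(β̂)∪support(β₀). -/

import Mathlib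

open Matrix

lemma sqrt_sum_sq_add_le {n : ℕ} (f g : Fin n → ℝ) :
    Real.sqrt (∑ i, (f i + g i) ^ 2) ≤ Real.sqrt (∑ i, f i ^ 2) + Real.sqrt (∑ i, g i ^ 2) := by
  have h := norm_add_le ((WithLp.equiv 2 (Fin n → ℝ)).symm f) ((WithLp.equiv 2 (Fin n → ℝ)).symm g)
  simpa [EuclideanSpace.norm_eq, Real.norm_eq_abs, sq_abs] using h

lemma quad_le {m : Type*} [Fintype m] [DecidableEq m] [Nonempty m] {B : Matrix m m ℝ}
    (hB : B.IsHermitian) (x : m → ℝ) :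
    x ⬝ᵥ B *ᵥ x ≤ (⨆ i, hB.eigenvalues i) * ∑ i, x i ^ 2 := by
  set U : Matrix m m ℝ := (hB.eigenvectorUnitary : Matrix m m ℝ) with hUdef
  have hU : U * star U = 1 := mem_unitaryGroup_iff.mp hB.eigenvectorUnitary.2
  have hsU : star U = Uᵀ := by
    rw [Matrix.star_eq_conjTranspose, conjTranspose_eq_transpose_of_trivial]
  set w : m → ℝ := Uᵀ *ᵥ x with hw
  have key : x ⬝ᵥ B *ᵥ x = ∑ i, hB.eigenvalues i * w i ^ 2 := by
    conv_lhs => rw [hB.spectral_theorem]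
    rw [Unitary.conjStarAlgAut_apply, ← hUdef, hsU, RCLike.ofReal_real_eq_id, Function.id_comp]
    rw [← mulVec_mulVec, ← mulVec_mulVec, dotProduct_mulVec, ← mulVec_transpose, ← hw]
    simp only [mulVec_diagonal, dotProduct]
    exact Finset.sum_congr rfl fun i _ => by ring
  have hw2 : ∑ i, w i ^ 2 = ∑ i, x i ^ 2 := by
    have h1 : ∑ i, w i ^ 2 = w ⬝ᵥ (Uᵀ *ᵥ x) := by
      rw [← hw]; simp [dotProduct, sq]
    have h2 : w ᵥ* Uᵀ = x := by
      rw [← mulVec_transpose, transpose_transpose, hw, mulVec_mulVec, ← hsU, hU, one_mulVec]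
    rw [h1, dotProduct_mulVec, h2]
    simp [dotProduct, sq]
  rw [key, ← hw2]
  have hb : ∀ i, hB.eigenvalues i ≤ ⨆ i, hB.eigenvalues i := fun i =>
    le_ciSup (Set.Finite.bddAbove (Set.finite_range _)) i
  calc ∑ i, hB.eigenvalues i * w i ^ 2 ≤ ∑ i, (⨆ i, hB.eigenvalues i) * w i ^ 2 :=
        Finset.sum_le_sum fun i _ => mul_le_mul_of_nonneg_right (hb i) (sq_nonneg _)
    _ = (⨆ i, hB.eigenvalues i) * ∑ i, w i ^ 2 := by rw [Finset.mul_sum]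

/-- rate bound for linearizable functionals of a post-model-selection
estimator.  `φmax` is the largest eigenvalue of the principal submatrix of
`A = (1/n) ∑ᵢ da(zᵢ) da(zᵢ)'` indexed by `K = support betaHat ∪ support β₀`. -/
theorem targeted_undersmoothing_stmt0
    (n p : ℕ) (hn : 0 < n)
    (a : Fin n → (Fin p → ℝ) → ℝ) (da : Fin n → Fin p → ℝ) (ca : Fin n → ℝ)
    (betaHat β₀ : Fin p → ℝ)
    (hca : ∀ i, 0 ≤ ca i)
    (hlin : ∀ i, ∀ β : Fin p → ℝ,
      |a i β - a i β₀ - ∑ j, da i j * (β j - β₀ j)|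
        ≤ ca i * Real.sqrt (∑ j, (β j - β₀ j) ^ 2))
    (A : Matrix (Fin p) (Fin p) ℝ)
    (hA : A = Matrix.of fun j k => (1 / (n : ℝ)) * ∑ i, da i j * da i k)
    (K : Finset (Fin p))
    (hK : K = Finset.univ.filter (fun j => betaHat j ≠ 0 ∨ β₀ j ≠ 0))
    (hAh : (A.submatrix (Subtype.val : {j // j ∈ K} → Fin p)
              (Subtype.val : {j // j ∈ K} → Fin p)).IsHermitian)
    (φmax : ℝ)
    (hφ : φmax = ⨆ i : {j // j ∈ K}, hAh.eigenvalues i) :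
    Real.sqrt ((1 / (n : ℝ)) * ∑ i, (a i betaHat - a i β₀) ^ 2)
      ≤ Real.sqrt (∑ j, (betaHat j - β₀ j) ^ 2) *
          (Real.sqrt φmax + Real.sqrt ((1 / (n : ℝ)) * ∑ i, (ca i) ^ 2)) := by
  set Δ : Fin p → ℝ := fun j => betaHat j - β₀ j with hΔ
  by_cases hz : ∀ j, betaHat j = β₀ j
  · have h0 : ∀ i, a i betaHat - a i β₀ = 0 := by
      intro i
      have h := hlin i betaHat
      have hs0 : (∑ j, (betaHat j - β₀ j) ^ 2) = 0 :=
        Finset.sum_eq_zero fun j _ => by rw [hz j]; ring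
      have hd0 : (∑ j, da i j * (betaHat j - β₀ j)) = 0 :=
        Finset.sum_eq_zero fun j _ => by rw [hz j]; ring
      rw [hs0, hd0, Real.sqrt_zero, mul_zero, sub_zero] at h
      exact abs_nonpos_iff.mp h
    have hT : (∑ i, (a i betaHat - a i β₀) ^ 2) = 0 :=
      Finset.sum_eq_zero fun i _ => by rw [h0 i]; ring
    have hs0 : (∑ j, (betaHat j - β₀ j) ^ 2) = 0 :=
      Finset.sum_eq_zero fun j _ => by rw [hz j]; ring
    rw [hT, hs0]
    simp
  · push_neg at hz
    obtain ⟨j₀, hj₀⟩ := hz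
    have hj₀K : j₀ ∈ K := by
      rw [hK, Finset.mem_filter]
      refine ⟨Finset.mem_univ _, ?_⟩
      by_contra h
      push_neg at h
      exact hj₀ (h.1.trans h.2.symm)
    have : Nonempty {j // j ∈ K} := ⟨⟨j₀, hj₀K⟩⟩
    have hΔK : ∀ j, j ∉ K → Δ j = 0 := by
      intro j hj
      rw [hK, Finset.mem_filter] at hj
      push_neg at hj
      have := hj (Finset.mem_univ j)
      simp [hΔ, this.1, this.2]
    set s : ℝ := ∑ j, Δ j ^ 2 with hsdef
    have hs : 0 ≤ s := Finset.sum_nonneg fun j _ => sq_nonneg _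
    set S : ℝ := Real.sqrt s with hSdef
    set v : Fin n → ℝ := fun i => ∑ j, da i j * Δ j with hv
    set r : Fin n → ℝ := fun i => a i betaHat - a i β₀ - v i with hr
    have hrb : ∀ i, |r i| ≤ ca i * S := fun i => hlin i betaHat
    have h1n : (0:ℝ) ≤ 1 / (n:ℝ) := by positivity
    -- triangle inequality
    have tri : Real.sqrt (∑ i, (a i betaHat - a i β₀) ^ 2)
        ≤ Real.sqrt (∑ i, v i ^ 2) + Real.sqrt (∑ i, r i ^ 2) := by
      have h := sqrt_sum_sq_add_le v r
      have he : ∀ i, v i + r i = a i betaHat - a i β₀ := fun i => by rw [hr]; ring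
      simpa [he] using h
    -- remainder bound
    have rsum : (∑ i, r i ^ 2) ≤ (∑ i, (ca i) ^ 2) * s := by
      rw [Finset.sum_mul]
      refine Finset.sum_le_sum fun i _ => ?_
      have h1 : r i ^ 2 ≤ (ca i * S) ^ 2 := by
        rw [← sq_abs (r i)]
        exact pow_le_pow_left₀ (abs_nonneg _) (hrb i) 2
      calc r i ^ 2 ≤ (ca i * S) ^ 2 := h1
        _ = ca i ^ 2 * s := by rw [mul_pow, hSdef, Real.sq_sqrt hs]
    -- quadratic form identity
    have hQ : (1 / (n:ℝ)) * ∑ i, v i ^ 2 = Δ ⬝ᵥ A *ᵥ Δ := by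
      subst hA
      simp only [dotProduct, mulVec, Matrix.of_apply, hv]
      rw [Finset.mul_sum]
      have step1 : ∑ i, (1/(n:ℝ)) * (∑ j, da i j * Δ j) ^ 2
          = ∑ i, ∑ j, ∑ k, (1/(n:ℝ)) * ((da i j * Δ j) * (da i k * Δ k)) := by
        refine Finset.sum_congr rfl fun i _ => ?_
        rw [sq, Finset.sum_mul_sum, Finset.mul_sum]
        exact Finset.sum_congr rfl fun j _ => Finset.mul_sum _ _ _
      have step2 : ∑ j, Δ j * ∑ k, ((1/(n:ℝ)) * ∑ i, da i j * da i k) * Δ k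
          = ∑ j, ∑ k, ∑ i, (1/(n:ℝ)) * ((da i j * Δ j) * (da i k * Δ k)) := by
        refine Finset.sum_congr rfl fun j _ => ?_
        rw [Finset.mul_sum]
        refine Finset.sum_congr rfl fun k _ => ?_
        have h1 : ((1/(n:ℝ)) * ∑ i, da i j * da i k) * Δ k
            = ∑ i, (1/(n:ℝ)) * (da i j * da i k) * Δ k := by
          rw [Finset.mul_sum, Finset.sum_mul]
        rw [h1, Finset.mul_sum]
        exact Finset.sum_congr rfl fun i _ => by ring
      rw [step1, step2, Finset.sum_comm]
      exact Finset.sum_congr rfl fun j _ => Finset.sum_comm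
    -- restriction of the quadratic form to K
    set y : {j // j ∈ K} → ℝ := fun j => Δ j.val with hy
    have inner : ∀ jj : Fin p, (∑ k, A jj k * Δ k)
        = ∑ k : {j // j ∈ K}, A jj k.val * Δ k.val := by
      intro jj
      rw [Finset.sum_coe_sort K (fun k => A jj k * Δ k)]
      exact (Finset.sum_subset K.subset_univ
        (fun k _ hk => by rw [hΔK k hk, mul_zero])).symm
    have hrestr : Δ ⬝ᵥ A *ᵥ Δ
        = y ⬝ᵥ (A.submatrix (Subtype.val : {j // j ∈ K} → Fin p) Subtype.val) *ᵥ y := by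
      simp only [dotProduct, mulVec, submatrix_apply, hy]
      calc ∑ jj, Δ jj * ∑ k, A jj k * Δ k
          = ∑ jj ∈ K, Δ jj * ∑ k, A jj k * Δ k :=
            (Finset.sum_subset K.subset_univ
              (fun j _ hj => by rw [hΔK j hj, zero_mul])).symm
        _ = ∑ jj : {j // j ∈ K}, Δ jj.val * ∑ k, A jj.val k * Δ k :=
            (Finset.sum_coe_sort K _).symm
        _ = ∑ jj : {j // j ∈ K}, Δ jj.val * ∑ k : {j // j ∈ K}, A jj.val k.val * Δ k.val :=
            Finset.sum_congr rfl fun jj _ => by rw [inner jj.val]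
    have hsum_s : (∑ jj : {j // j ∈ K}, y jj ^ 2) = s := by
      rw [hy]
      rw [Finset.sum_coe_sort K (fun j => Δ j ^ 2)]
      exact Finset.sum_subset K.subset_univ (fun j _ hj => by rw [hΔK j hj]; ring)
    have quad := quad_le hAh y
    rw [← hφ, hsum_s] at quad
    have hvb : (1 / (n:ℝ)) * ∑ i, v i ^ 2 ≤ φmax * s := by
      rw [hQ, hrestr]; exact quad
    -- assemble
    calc Real.sqrt ((1/(n:ℝ)) * ∑ i, (a i betaHat - a i β₀) ^ 2)
        = Real.sqrt (1/(n:ℝ)) * Real.sqrt (∑ i, (a i betaHat - a i β₀) ^ 2) :=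
          Real.sqrt_mul h1n _
      _ ≤ Real.sqrt (1/(n:ℝ)) * (Real.sqrt (∑ i, v i ^ 2) + Real.sqrt (∑ i, r i ^ 2)) :=
          mul_le_mul_of_nonneg_left tri (Real.sqrt_nonneg _)
      _ = Real.sqrt ((1/(n:ℝ)) * ∑ i, v i ^ 2) + Real.sqrt ((1/(n:ℝ)) * ∑ i, r i ^ 2) := by
          rw [mul_add, ← Real.sqrt_mul h1n, ← Real.sqrt_mul h1n]
      _ ≤ Real.sqrt (φmax * s) + Real.sqrt (((1/(n:ℝ)) * ∑ i, (ca i) ^ 2) * s) := by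
          refine add_le_add (Real.sqrt_le_sqrt hvb) (Real.sqrt_le_sqrt ?_)
          calc (1/(n:ℝ)) * ∑ i, r i ^ 2 ≤ (1/(n:ℝ)) * ((∑ i, (ca i) ^ 2) * s) :=
                mul_le_mul_of_nonneg_left rsum h1n
            _ = ((1/(n:ℝ)) * ∑ i, (ca i) ^ 2) * s := by ring
      _ = Real.sqrt φmax * S + Real.sqrt ((1/(n:ℝ)) * ∑ i, (ca i) ^ 2) * S := by
          rw [Real.sqrt_mul' _ hs, Real.sqrt_mul' _ hs, hSdef]
      _ = S * (Real.sqrt φmax + Real.sqrt ((1/(n:ℝ)) * ∑ i, (ca i) ^ 2)) := by ring
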